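/- Reachability reduces to co-occurrence: given a transition system over multisets with per-function validity predicates, if we add a fresh auxiliary function g whose validity predicate is identically true (g can always be scheduled) and which does not affect any other validity predicate (i.e., every V_h is invariant under adding or removing copies of g from the state), then f is reachable from the empty state in the original system if and only if f and g co-occur in some reachable state of the extended system. -/

import Mathlib

/-- One step, with additions restricted to functions satisfying `A`. -/
def Step {F : Type*} [DecidableEq F] (A : F → Prop) (V : F → Multiset F → Prop)
    (σ τ : Multiset F) : Prop :=
  (∃ h : F, A h ∧ V h σ ∧ τ = h ::ₘ σ) ∨ (∃ h ∈ σ, τ = σ.erase h)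

def Reach {F : Type*} [DecidableEq F] (A : F → Prop) (V : F → Multiset F → Prop)
    (σ : Multiset F) : Prop :=
  Relation.ReflTransGen (Step A V) 0 σ


private lemma filter_erase_aux {F : Type*} [DecidableEq F] (p : F → Prop) [DecidablePred p]
    (s : Multiset F) (a : F) :
    Multiset.filter p (s.erase a) =
      if p a then (Multiset.filter p s).erase a else Multiset.filter p s := by
  rw [← Multiset.sub_singleton, Multiset.filter_sub, ← Multiset.sub_singleton]
  by_cases h : p a <;> simp [Multiset.filter_singleton, h]

theorem reach_reduces_to_coOccur {F : Type*} [DecidableEq F]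
    (V : F → Multiset F → Prop) (g : F)
    (hg : ∀ σ, V g σ)
    (hinv : ∀ h : F, h ≠ g → ∀ σ : Multiset F, V h σ ↔ V h (σ.filter (· ≠ g)))
    (f : F) (hfg : f ≠ g) :
    (∃ σ : Multiset F, Reach (fun h => h ≠ g) V σ ∧ f ∈ σ) ↔
      (∃ σ : Multiset F, Reach (fun _ => True) V σ ∧ f ∈ σ ∧ g ∈ σ) := by
  constructor
  · rintro ⟨σ, hσ, hf⟩
    refine ⟨g ::ₘ σ, ?_, Multiset.mem_cons_of_mem hf, Multiset.mem_cons_self _ _⟩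
    have hmono : ∀ τ, Reach (fun h => h ≠ g) V τ → Reach (fun _ => True) V τ := by
      intro τ hτ
      induction hτ with
      | refl => exact Relation.ReflTransGen.refl
      | tail _ hstep ih =>
        refine ih.tail ?_
        rcases hstep with ⟨h, _, hv, heq⟩ | hrem
        · exact Or.inl ⟨h, trivial, hv, heq⟩
        · exact Or.inr hrem
    exact (hmono σ hσ).tail (Or.inl ⟨g, trivial, hg _, rfl⟩)
  · rintro ⟨σ, hσ, hf, -⟩
    refine ⟨σ.filter (· ≠ g), ?_, Multiset.mem_filter.2 ⟨hf, hfg⟩⟩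
    clear hf
    induction hσ with
    | refl => rw [Multiset.filter_zero]; exact Relation.ReflTransGen.refl
    | @tail τ ρ _ hstep ih =>
      rcases hstep with ⟨h, -, hv, heq⟩ | ⟨h, hmem, heq⟩
      · subst heq
        by_cases hhg : h = g
        · subst hhg
          simpa [Multiset.filter_cons] using ih
        · refine ih.tail (Or.inl ⟨h, hhg, (hinv h hhg τ).1 hv, ?_⟩)
          simp [Multiset.filter_cons, hhg]
      · subst heq
        by_cases hhg : h = g
        · subst hhg
          rw [filter_erase_aux]
          simpa using ih
        · refine ih.tail (Or.inr ⟨h, Multiset.mem_filter.2 ⟨hmem, hhg⟩, ?_⟩)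
          rw [filter_erase_aux]
          simp [hhg]
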